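/- Let ν be a valuation of rank 1 centered on a local noetherian ring R, with support P_∞ = ν^{-1}(∞). Then ν(R ∖ P_∞) contains no strictly increasing sequence that is bounded above; i.e., every bounded-above subset of values ν(R ∖ P_∞) is finite in any strictly increasing enumeration. -/

import Mathlib

open IsLocalRing

/-- The valuation ideal `{r : R | t ≤ ν r}`. -/
def valIdeal {R : Type*} [CommRing R] (ν : AddValuation R (WithTop ℝ))
    (h0 : ∀ r : R, 0 ≤ ν r) (t : ℝ) : Ideal R where
  carrier := {r | (t : WithTop ℝ) ≤ ν r}
  zero_mem' := by simp [ν.map_zero]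
  add_mem' := fun {a b} ha hb => le_trans (le_min ha hb) (ν.map_add a b)
  smul_mem' := fun c x hx => by
    simp only [smul_eq_mul, Set.mem_setOf_eq] at *
    calc (t : WithTop ℝ) ≤ ν x := hx
      _ = 0 + ν x := (zero_add _).symm
      _ ≤ ν c + ν x := add_le_add_left (h0 c) _
      _ = ν (c * x) := (ν.map_mul c x).symm

lemma mem_valIdeal_iff {R : Type*} [CommRing R] {ν : AddValuation R (WithTop ℝ)}
    {h0 : ∀ r : R, 0 ≤ ν r} {t : ℝ} {r : R} :
    r ∈ valIdeal ν h0 t ↔ (t : WithTop ℝ) ≤ ν r := Iff.rfl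

/-- A noetherian module over a noetherian local ring killed by the maximal ideal is artinian. -/
lemma isArtinian_of_torsionBy_maximalIdeal {R : Type*} [CommRing R] [IsNoetherianRing R]
    [IsLocalRing R] (M : Type*) [AddCommGroup M] [Module R M] [IsNoetherian R M]
    (h : Module.IsTorsionBySet R M (maximalIdeal R)) : IsArtinian R M := by
  letI := h.module
  haveI : IsScalarTower R (R ⧸ maximalIdeal R) M := h.isScalarTower
  haveI : Module.Finite R M := ⟨IsNoetherian.noetherian ⊤⟩
  haveI : Module.Finite (R ⧸ maximalIdeal R) M :=
    Module.Finite.of_restrictScalars_finite R _ M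
  letI : Field (R ⧸ maximalIdeal R) := Ideal.Quotient.field _
  haveI hart : IsArtinian (R ⧸ maximalIdeal R) M := isArtinian_of_fg_of_artinian'
  -- every `R`-submodule is an `R ⧸ 𝔪`-submodule, so well-foundedness transfers
  let g : Submodule R M → Submodule (R ⧸ maximalIdeal R) M := fun N =>
    { carrier := N
      add_mem' := fun ha hb => N.add_mem ha hb
      zero_mem' := N.zero_mem
      smul_mem' := fun k x hx => by
        obtain ⟨a, rfl⟩ := Ideal.Quotient.mk_surjective k
        rw [h.mk_smul]
        exact N.smul_mem a hx }
  have hg : StrictMono g := by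
    intro N1 N2 h12
    rw [SetLike.lt_iff_le_and_exists] at h12 ⊢
    exact ⟨fun x hx => h12.1 hx, h12.2⟩
  exact hg.wellFoundedLT

/-- `R ⧸ 𝔪^k` is an artinian `R`-module for a noetherian local ring `R`. -/
lemma isArtinian_quot_pow_maximalIdeal {R : Type*} [CommRing R] [IsNoetherianRing R]
    [IsLocalRing R] (k : ℕ) : IsArtinian R (R ⧸ (maximalIdeal R ^ k : Ideal R)) := by
  induction k with
  | zero =>
      haveI : Subsingleton (R ⧸ (maximalIdeal R ^ 0 : Ideal R)) := by
        rw [Submodule.Quotient.subsingleton_iff, pow_zero, Ideal.one_eq_top]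
      exact isArtinian_of_finite
  | succ k ih =>
      set p : Ideal R := maximalIdeal R ^ (k + 1) with hp
      set q : Ideal R := maximalIdeal R ^ k with hq
      have hle : p ≤ q := Ideal.pow_le_pow_right (Nat.le_succ k)
      set S : Submodule R (R ⧸ p) := Submodule.map p.mkQ q with hS
      rw [isArtinian_iff_submodule_quotient S]
      constructor
      · refine isArtinian_of_torsionBy_maximalIdeal (↥S) ?_
        intro x a
        obtain ⟨y, hy, hxy⟩ := x.2
        have hval : (a : R) • (x : R ⧸ p) = 0 := by
          rw [← hxy]
          show (a : R) • Submodule.Quotient.mk y = 0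
          rw [← Submodule.Quotient.mk_smul, Submodule.Quotient.mk_eq_zero]
          have : (a : R) • y ∈ maximalIdeal R * q := by
            rw [smul_eq_mul]
            exact Ideal.mul_mem_mul a.2 hy
          rwa [hp, pow_succ']
        exact Subtype.ext hval
      · exact isArtinian_of_linearEquiv
          (Submodule.quotientQuotientEquivQuotient p q hle).symm

/-- **No bounded increasing sequences of values for rank-one valuations.**
Let `ν` be a valuation of rank 1 (value group order-embeddable in `ℝ`, so we take
values in `WithTop ℝ`) centered on a local noetherian ring `R`, with support
`P_∞ = ν⁻¹(∞)`.  "Centered" means `ν ≥ 0` on `R` and `ν > 0` exactly on the maximal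
ideal.  Then the value set `ν(R ∖ P_∞)` contains no strictly increasing sequence
which is bounded above. -/
theorem no_bounded_increasing_sequence_of_values
    {R : Type*} [CommRing R] [IsNoetherianRing R] [IsLocalRing R]
    (ν : AddValuation R (WithTop ℝ))
    (hcenter₀ : ∀ r : R, 0 ≤ ν r)
    (hcenter : ∀ r : R, 0 < ν r ↔ r ∈ IsLocalRing.maximalIdeal R) :
    ¬ ∃ s : ℕ → ℝ, StrictMono s ∧ (∀ n : ℕ, ∃ r : R, ν r = (s n : WithTop ℝ)) ∧
      BddAbove (Set.range s) := by
  rintro ⟨s, hs, hv, M, hM⟩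
  have hM' : ∀ n, s n ≤ M := fun n => hM (Set.mem_range_self n)
  -- a positive lower bound `c` for the values on the maximal ideal
  obtain ⟨G, hG⟩ : (maximalIdeal R).FG := IsNoetherian.noetherian _
  set c' : WithTop ℝ := (G.inf fun g => ν g) ⊓ 1 with hc'def
  have hc'pos : 0 < c' := by
    refine lt_inf_iff.mpr ⟨?_, zero_lt_one⟩
    refine (Finset.lt_inf_iff (by exact lt_top_iff_ne_top.mpr (by simp))).mpr ?_
    intro g hg
    exact (hcenter g).mpr (hG ▸ Submodule.subset_span hg)
  have hc'lt : c' < ⊤ := lt_of_le_of_lt inf_le_right (by exact_mod_cast WithTop.coe_lt_top (1 : ℝ))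
  obtain ⟨c, hc⟩ : ∃ c : ℝ, (c : WithTop ℝ) = c' := WithTop.ne_top_iff_exists.mp hc'lt.ne
  have hcpos : 0 < c := by
    have := hc ▸ hc'pos
    exact_mod_cast this
  -- elements of the maximal ideal have value at least `c'`
  have hmem_c : ∀ x ∈ maximalIdeal R, c' ≤ ν x := by
    intro x hx
    rw [← hG] at hx
    induction hx using Submodule.span_induction with
    | mem g hg => exact le_trans inf_le_left (Finset.inf_le hg)
    | zero => simp [ν.map_zero]
    | add x y hx hy ihx ihy => exact le_trans (le_min ihx ihy) (ν.map_add x y)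
    | smul a x hx ihx =>
        simp only [smul_eq_mul]
        calc c' ≤ ν x := ihx
          _ = 0 + ν x := (zero_add _).symm
          _ ≤ ν a + ν x := add_le_add_left (hcenter₀ a) _
          _ = ν (a * x) := (ν.map_mul a x).symm
  -- elements of `𝔪^j` have value at least `j • c'`
  have hpow : ∀ (j : ℕ) (x : R), x ∈ (maximalIdeal R ^ j : Ideal R) → j • c' ≤ ν x := by
    intro j
    induction j with
    | zero => intro x _; rw [zero_nsmul]; exact hcenter₀ x
    | succ j ih =>
        intro x hx
        rw [pow_succ' (maximalIdeal R) j] at hx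
        refine Submodule.mul_induction_on hx (fun a ha b hb => ?_)
          (fun x y ihx ihy => le_trans (le_min ihx ihy) (ν.map_add x y))
        calc (j + 1) • c' = c' + j • c' := by rw [succ_nsmul, add_comm]
          _ ≤ ν a + ν b := add_le_add (hmem_c a ha) (ih b hb)
          _ = ν (a * b) := (ν.map_mul a b).symm
  -- choose `k` with `k * c > M`
  obtain ⟨k, hk⟩ := exists_nat_gt (M / c)
  have hMk : M < k * c := by
    rw [div_lt_iff₀ hcpos] at hk
    linarith
  -- the chain of valuation ideals
  set I : ℕ → Ideal R := fun n => valIdeal ν hcenter₀ (s n) with hI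
  have hpowle : ∀ n, (maximalIdeal R ^ k : Ideal R) ≤ I n := by
    intro n x hx
    have h1 : (k : ℕ) • c' = ((k * c : ℝ) : WithTop ℝ) := by
      rw [← hc, ← WithTop.coe_nsmul, nsmul_eq_mul]
    have h2 : ((k * c : ℝ) : WithTop ℝ) ≤ ν x := h1 ▸ hpow k x hx
    refine mem_valIdeal_iff.mpr (le_trans ?_ h2)
    exact_mod_cast le_of_lt (lt_of_le_of_lt (hM' n) hMk)
  have hIanti : ∀ n, I (n + 1) ≤ I n := by
    intro n x hx
    exact mem_valIdeal_iff.mpr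
      (le_trans (by exact_mod_cast (hs (lt_add_one n)).le) (mem_valIdeal_iff.mp hx))
  have hne : ∀ n, I (n + 1) ≠ I n := by
    intro n heq
    obtain ⟨r, hr⟩ := hv n
    have h1 : r ∈ I n := mem_valIdeal_iff.mpr (le_of_eq hr.symm)
    rw [← heq] at h1
    have h2 : ((s (n + 1) : ℝ) : WithTop ℝ) ≤ ((s n : ℝ) : WithTop ℝ) :=
      hr ▸ mem_valIdeal_iff.mp h1
    exact absurd (by exact_mod_cast h2) (not_le.mpr (hs (lt_add_one n)))
  -- transfer to the artinian quotient
  haveI := isArtinian_quot_pow_maximalIdeal (R := R) k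
  set p : Ideal R := maximalIdeal R ^ k with hp
  set f : ℕ → Submodule R (R ⧸ p) := fun n => Submodule.map p.mkQ (I n) with hf
  have hcomap : ∀ n, (f n).comap p.mkQ = I n := by
    intro n
    rw [hf]
    rw [Submodule.comap_map_mkQ, sup_eq_right.mpr (hpowle n)]
  have hfmono : Monotone (fun n => OrderDual.toDual (f n)) := by
    have haf : Antitone f := antitone_nat_of_succ_le fun n => Submodule.map_mono (hIanti n)
    exact haf.dual_right
  obtain ⟨n, hn⟩ := IsArtinian.monotone_stabilizes (R := R) (M := R ⧸ p)
    ⟨fun n => OrderDual.toDual (f n), hfmono⟩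
  have heq : f n = f (n + 1) := hn (n + 1) (Nat.le_succ n)
  exact hne n (by rw [← hcomap n, ← hcomap (n + 1), heq])
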